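/- arXiv:2101.11443 — 7 statements merged into one kernel-verified Lean document; each statement's English description precedes it below -/
import Mathlib

section
/- Let f : X → U → ℝ where X is a convex subset of ℝⁿ and f(·,u) is convex for every u ∈ U. Suppose sequences x₁,…,x_T ∈ X and u₁,…,u_T ∈ U satisfy the two regret bounds: ∑_{t=1}^T f(x_t,u_t) − min_{x∈X} ∑_{t=1}^T f(x,u_t) ≤ R_x and max_{u∈U} ∑_{t=1}^T f(x_t,u) − ∑_{t=1}^T f(x_t,u_t) ≤ R_u. Then the average point x̄ = (1/T)∑_{t=1}^T x_t satisfies max_{u∈U} f(x̄,u) − min_{x∈X} max_{u∈U} f(x,u) ≤ (R_x + R_u)/T. -/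
/-- Two weak learners: regret bounds imply the average iterate is
near-minimax optimal (Theorem 1 / thm:main-result). -/
theorem stmt_0 {n : ℕ} {U : Type*} [TopologicalSpace U] [CompactSpace U] [Nonempty U]
    (X : Set (EuclideanSpace ℝ (Fin n))) (hXne : X.Nonempty) (hXcpt : IsCompact X)
    (hXconv : Convex ℝ X)
    (f : EuclideanSpace ℝ (Fin n) → U → ℝ)
    (hfcont : Continuous fun p : EuclideanSpace ℝ (Fin n) × U => f p.1 p.2)
    (hfconv : ∀ u : U, ConvexOn ℝ X fun x => f x u)
    (T : ℕ) (hT : 1 ≤ T)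
    (x : Fin T → EuclideanSpace ℝ (Fin n)) (u : Fin T → U)
    (hxX : ∀ t, x t ∈ X)
    (Rx Ru : ℝ)
    (hRx : (∑ t, f (x t) (u t)) - sInf ((fun x' => ∑ t, f x' (u t)) '' X) ≤ Rx)
    (hRu : (⨆ u' : U, ∑ t, f (x t) u') - ∑ t, f (x t) (u t) ≤ Ru) :
    (⨆ u' : U, f ((T : ℝ)⁻¹ • ∑ t, x t) u')
      - sInf ((fun x' => ⨆ u' : U, f x' u') '' X) ≤ (Rx + Ru) / T := by
  have hTpos : (0:ℝ) < T := by exact_mod_cast hT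
  have hTinv : (0:ℝ) ≤ (T:ℝ)⁻¹ := by positivity
  -- continuity helpers
  have hcu : ∀ x₀, Continuous (fun u' => f x₀ u') := fun x₀ =>
    hfcont.comp (continuous_const.prodMk continuous_id)
  have hcx : ∀ u₀, Continuous (fun x' => f x' u₀) := fun u₀ =>
    hfcont.comp (continuous_id.prodMk continuous_const)
  have hbddu : ∀ x₀, BddAbove (Set.range fun u' => f x₀ u') := fun x₀ =>
    (isCompact_range (hcu x₀)).bddAbove
  have hbddS : BddAbove (Set.range fun u' : U => ∑ t, f (x t) u') := by
    exact (isCompact_range (continuous_finset_sum _ fun t _ => hcu (x t))).bddAbove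
  -- I := inf over X of ∑ f(·, u t)
  set I := sInf ((fun x' => ∑ t, f x' (u t)) '' X) with hI
  have hbbI : BddBelow ((fun x' => ∑ t, f x' (u t)) '' X) :=
    (hXcpt.image (continuous_finset_sum _ fun t _ => hcx (u t))).bddBelow
  -- Jensen: f (x̄) u' ≤ T⁻¹ * ∑ f (x t) u'
  have jensen : ∀ u', f ((T : ℝ)⁻¹ • ∑ t, x t) u' ≤ (T:ℝ)⁻¹ * ∑ t, f (x t) u' := by
    intro u'
    have hsum : (∑ t : Fin T, (T:ℝ)⁻¹) = 1 := by
      simp [Finset.sum_const, mul_inv_cancel₀ (ne_of_gt hTpos)]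
    have := (hfconv u').map_sum_le (t := Finset.univ) (w := fun _ => (T:ℝ)⁻¹)
      (p := x) (fun i _ => hTinv) hsum (fun i _ => hxX i)
    calc f ((T : ℝ)⁻¹ • ∑ t, x t) u' = f (∑ t, (T:ℝ)⁻¹ • x t) u' := by
          rw [Finset.smul_sum]
      _ ≤ ∑ t, (T:ℝ)⁻¹ • f (x t) u' := this
      _ = ∑ t, (T:ℝ)⁻¹ * f (x t) u' := by simp [smul_eq_mul]
      _ = (T:ℝ)⁻¹ * ∑ t, f (x t) u' := by rw [Finset.mul_sum]
  -- sup over u' of f x̄ ≤ T⁻¹ * sup ∑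
  have h1 : (⨆ u' : U, f ((T : ℝ)⁻¹ • ∑ t, x t) u')
      ≤ (T:ℝ)⁻¹ * ⨆ u' : U, ∑ t, f (x t) u' := by
    apply ciSup_le
    intro u'
    exact (jensen u').trans (mul_le_mul_of_nonneg_left (le_ciSup hbddS u') hTinv)
  -- sup ∑ ≤ Ru + Rx + I
  have h2 : (⨆ u' : U, ∑ t, f (x t) u') ≤ Ru + Rx + I := by
    have := hRu
    have := hRx
    linarith
  -- T⁻¹ * I ≤ sInf (sup '' X)
  have h3 : (T:ℝ)⁻¹ * I ≤ sInf ((fun x' => ⨆ u' : U, f x' u') '' X) := by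
    apply le_csInf (hXne.image _)
    rintro b ⟨x', hx', rfl⟩
    have hIle : I ≤ ∑ t, f x' (u t) := csInf_le hbbI ⟨x', hx', rfl⟩
    have hsumle : (∑ t, f x' (u t)) ≤ (T:ℝ) * ⨆ u' : U, f x' u' := by
      calc (∑ t, f x' (u t)) ≤ ∑ _t : Fin T, ⨆ u' : U, f x' u' :=
            Finset.sum_le_sum fun t _ => le_ciSup (hbddu x') (u t)
        _ = (T:ℝ) * ⨆ u' : U, f x' u' := by
            simp [Finset.sum_const, nsmul_eq_mul]
    rw [inv_mul_le_iff₀ hTpos]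
    linarith
  have key : (T:ℝ)⁻¹ * (Ru + Rx + I) - (T:ℝ)⁻¹ * I = (Rx + Ru) / T := by
    field_simp; ring
  calc (⨆ u' : U, f ((T : ℝ)⁻¹ • ∑ t, x t) u')
      - sInf ((fun x' => ⨆ u' : U, f x' u') '' X)
      ≤ (T:ℝ)⁻¹ * (⨆ u' : U, ∑ t, f (x t) u') - (T:ℝ)⁻¹ * I := by
        have := h1; have := h3; linarith
    _ ≤ (T:ℝ)⁻¹ * (Ru + Rx + I) - (T:ℝ)⁻¹ * I := by
        have := mul_le_mul_of_nonneg_left h2 hTinv; linarith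
    _ = (Rx + Ru) / T := key
end

section
/- Let f : X → U → ℝ with X convex and f(·,u) convex for every u. Suppose u₁,…,u_T ∈ U is any sequence satisfying max_{u∈U} ∑_{t=1}^T f(x_t,u) − ∑_{t=1}^T f(x_t,u_t) ≤ R_u, where each x_t is chosen as a minimizer x_t ∈ argmin_{x∈X} f(x,u_t). Then x̄ = (1/T)∑ x_t satisfies max_{u∈U} f(x̄,u) − min_{x∈X} max_{u∈U} f(x,u) ≤ R_u/T. -/
/-- Biased play with a strong dual learner: if each `x t` is an exact
minimizer of `f (·, u t)` over `X`, the regret bound of the `u`-player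
alone controls the minimax gap of the average iterate (Theorem 2). -/
theorem stmt_1 {n : ℕ} {U : Type*} [TopologicalSpace U] [CompactSpace U] [Nonempty U]
    (X : Set (EuclideanSpace ℝ (Fin n))) (hXne : X.Nonempty) (hXcpt : IsCompact X)
    (hXconv : Convex ℝ X)
    (f : EuclideanSpace ℝ (Fin n) → U → ℝ)
    (hfcont : Continuous fun p : EuclideanSpace ℝ (Fin n) × U => f p.1 p.2)
    (hfconv : ∀ u : U, ConvexOn ℝ X fun x => f x u)
    (T : ℕ) (hT : 1 ≤ T)
    (x : Fin T → EuclideanSpace ℝ (Fin n)) (u : Fin T → U)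
    (hxX : ∀ t, x t ∈ X)
    (hxmin : ∀ t, ∀ x' ∈ X, f (x t) (u t) ≤ f x' (u t))
    (Ru : ℝ)
    (hRu : (⨆ u' : U, ∑ t, f (x t) u') - ∑ t, f (x t) (u t) ≤ Ru) :
    (⨆ u' : U, f ((T : ℝ)⁻¹ • ∑ t, x t) u')
      - sInf ((fun x' => ⨆ u' : U, f x' u') '' X) ≤ Ru / T := by
  have hTpos : (0:ℝ) < T := by exact_mod_cast hT
  have hTinv : (0:ℝ) ≤ (T:ℝ)⁻¹ := by positivity
  -- boundedness of sup over U for any fixed y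
  have hbdd : ∀ y : EuclideanSpace ℝ (Fin n), BddAbove (Set.range fun u' : U => f y u') := by
    intro y
    exact (isCompact_range ((hfcont.comp (Continuous.prodMk_right y)))).bddAbove
  have hbddS : BddAbove (Set.range fun u' : U => ∑ t, f (x t) u') := by
    have : Continuous fun u' : U => ∑ t, f (x t) u' :=
      continuous_finset_sum _ fun t _ => hfcont.comp (Continuous.prodMk_right (x t))
    exact (isCompact_range this).bddAbove
  -- weights
  have hwsum : ∑ _t : Fin T, (T:ℝ)⁻¹ = 1 := by
    simp [Finset.sum_const, Finset.card_univ]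
    field_simp
  -- average point
  have hxbar : (T:ℝ)⁻¹ • ∑ t, x t = ∑ t, (T:ℝ)⁻¹ • x t := by
    rw [Finset.smul_sum]
  have hxbarX : ((T:ℝ)⁻¹ • ∑ t, x t) ∈ X := by
    rw [hxbar]
    exact hXconv.sum_mem (fun t _ => hTinv) hwsum (fun t _ => hxX t)
  -- Jensen
  have jensen : ∀ u' : U, f ((T:ℝ)⁻¹ • ∑ t, x t) u' ≤ (T:ℝ)⁻¹ * ∑ t, f (x t) u' := by
    intro u'
    rw [hxbar, Finset.mul_sum]
    exact (hfconv u').map_sum_le (fun t _ => hTinv) hwsum (fun t _ => hxX t)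
  -- claim 1
  have claim1 : (⨆ u' : U, f ((T:ℝ)⁻¹ • ∑ t, x t) u') ≤ (T:ℝ)⁻¹ * ⨆ u' : U, ∑ t, f (x t) u' := by
    refine ciSup_le fun u' => (jensen u').trans ?_
    exact mul_le_mul_of_nonneg_left (le_ciSup hbddS u') hTinv
  -- claim 2
  have claim2 : (T:ℝ)⁻¹ * ∑ t, f (x t) (u t) ≤ sInf ((fun x' => ⨆ u' : U, f x' u') '' X) := by
    refine le_csInf (hXne.image _) ?_
    rintro b ⟨x', hx', rfl⟩
    have h1 : ∑ t, f (x t) (u t) ≤ ∑ t : Fin T, ⨆ u' : U, f x' u' := by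
      refine Finset.sum_le_sum fun t _ => ?_
      exact (hxmin t x' hx').trans (le_ciSup (hbdd x') (u t))
    have h2 : (∑ _t : Fin T, ⨆ u' : U, f x' u') = (T:ℝ) * ⨆ u' : U, f x' u' := by
      simp [Finset.sum_const, Finset.card_univ]
    rw [h2] at h1
    calc (T:ℝ)⁻¹ * ∑ t, f (x t) (u t) ≤ (T:ℝ)⁻¹ * ((T:ℝ) * ⨆ u' : U, f x' u') :=
          mul_le_mul_of_nonneg_left h1 hTinv
      _ = ⨆ u' : U, f x' u' := by field_simp
  have : (⨆ u' : U, f ((T:ℝ)⁻¹ • ∑ t, x t) u') - sInf ((fun x' => ⨆ u' : U, f x' u') '' X)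
      ≤ (T:ℝ)⁻¹ * ((⨆ u' : U, ∑ t, f (x t) u') - ∑ t, f (x t) (u t)) := by
    rw [mul_sub]
    linarith [claim1, claim2]
  refine this.trans ?_
  rw [div_eq_inv_mul]
  exact mul_le_mul_of_nonneg_left hRu hTinv
end

section
/- Let f : X → U → ℝ with X convex and f(·,u) convex for every u. Suppose u₁,…,u_T ∈ U satisfies max_{u∈U} ∑_{t=1}^T f(x_t,u) − ∑_{t=1}^T f(x_t,u_t) ≤ R_u, where each x_t satisfies f(x_t,u_t) ≤ C · min_{x∈X} f(x,u_t) for some C > 1 (a C-approximate minimizer), and f is nonnegative. Then x̄ = (1/T)∑ x_t satisfies max_{u∈U} f(x̄,u) − C · min_{x∈X} max_{u∈U} f(x,u) ≤ R_u/T. -/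
/-- Biased play with a `C`-approximate optimization oracle for the primal
player: the average iterate is `C`-approximately minimax optimal. -/
theorem stmt_2 {n : ℕ} {U : Type*} [TopologicalSpace U] [CompactSpace U] [Nonempty U]
    (X : Set (EuclideanSpace ℝ (Fin n))) (hXne : X.Nonempty) (hXcpt : IsCompact X)
    (hXconv : Convex ℝ X)
    (f : EuclideanSpace ℝ (Fin n) → U → ℝ)
    (hfcont : Continuous fun p : EuclideanSpace ℝ (Fin n) × U => f p.1 p.2)
    (hfnonneg : ∀ x u, 0 ≤ f x u)
    (hfconv : ∀ u : U, ConvexOn ℝ X fun x => f x u)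
    (C : ℝ) (hC : 1 < C)
    (T : ℕ) (hT : 1 ≤ T)
    (x : Fin T → EuclideanSpace ℝ (Fin n)) (u : Fin T → U)
    (hxX : ∀ t, x t ∈ X)
    (hxapprox : ∀ t, f (x t) (u t) ≤ C * sInf ((fun x' => f x' (u t)) '' X))
    (Ru : ℝ)
    (hRu : (⨆ u' : U, ∑ t, f (x t) u') - ∑ t, f (x t) (u t) ≤ Ru) :
    (⨆ u' : U, f ((T : ℝ)⁻¹ • ∑ t, x t) u')
      - C * sInf ((fun x' => ⨆ u' : U, f x' u') '' X) ≤ Ru / T := by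
  have hTpos : (0:ℝ) < T := by exact_mod_cast hT
  have hC0 : (0:ℝ) ≤ C := le_of_lt (lt_trans one_pos hC)
  -- continuity in u for fixed x
  have hcontu : ∀ x0 : EuclideanSpace ℝ (Fin n), Continuous fun u' : U => f x0 u' := by
    intro x0
    exact hfcont.comp (Continuous.prodMk continuous_const continuous_id)
  have hbdd : ∀ x0 : EuclideanSpace ℝ (Fin n), BddAbove (Set.range fun u' : U => f x0 u') :=
    fun x0 => (isCompact_range (hcontu x0)).bddAbove
  have hbddS : BddAbove (Set.range fun u' : U => ∑ t, f (x t) u') := by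
    have : Continuous fun u' : U => ∑ t, f (x t) u' :=
      continuous_finset_sum _ (fun t _ => hcontu (x t))
    exact (isCompact_range this).bddAbove
  set m := sInf ((fun x' => ⨆ u' : U, f x' u') '' X) with hm
  set S := ⨆ u' : U, ∑ t, f (x t) u' with hS
  -- each per-round inf is ≤ m
  have hinf_le : ∀ t : Fin T, sInf ((fun x' => f x' (u t)) '' X) ≤ m := by
    intro t
    apply le_csInf (hXne.image _)
    rintro b ⟨x0, hx0, rfl⟩
    have h1 : sInf ((fun x' => f x' (u t)) '' X) ≤ f x0 (u t) :=
      csInf_le ⟨0, by rintro b ⟨x1, hx1, rfl⟩; exact hfnonneg x1 (u t)⟩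
        ⟨x0, hx0, rfl⟩
    exact h1.trans (le_ciSup (hbdd x0) (u t))
  -- sum bound
  have hsum : ∑ t, f (x t) (u t) ≤ C * (T * m) := by
    calc ∑ t, f (x t) (u t) ≤ ∑ t : Fin T, C * m := by
          apply Finset.sum_le_sum
          intro t _
          exact (hxapprox t).trans (mul_le_mul_of_nonneg_left (hinf_le t) hC0)
      _ = C * (T * m) := by
          rw [Finset.sum_const, Finset.card_fin]; ring
  have hSle : S ≤ Ru + C * (T * m) := by
    have := hRu
    linarith
  -- Jensen
  have hjensen : ∀ u' : U, f ((T : ℝ)⁻¹ • ∑ t, x t) u' ≤ (T:ℝ)⁻¹ * ∑ t, f (x t) u' := by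
    intro u'
    have hw : ∀ t ∈ (Finset.univ : Finset (Fin T)), (0:ℝ) ≤ (fun _ : Fin T => (T:ℝ)⁻¹) t := fun _ _ => inv_nonneg.mpr hTpos.le
    have hw1 : ∑ _t : Fin T, (T:ℝ)⁻¹ = 1 := by
      rw [Finset.sum_const, Finset.card_fin, nsmul_eq_mul, mul_inv_cancel₀ (ne_of_gt hTpos)]
    have := (hfconv u').map_sum_le hw hw1 (fun t _ => hxX t)
    calc f ((T : ℝ)⁻¹ • ∑ t, x t) u'
        = f (∑ t, (T:ℝ)⁻¹ • x t) u' := by rw [Finset.smul_sum]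
      _ ≤ ∑ t, (T:ℝ)⁻¹ * f (x t) u' := this
      _ = (T:ℝ)⁻¹ * ∑ t, f (x t) u' := by rw [Finset.mul_sum]
  have hsup : (⨆ u' : U, f ((T : ℝ)⁻¹ • ∑ t, x t) u') ≤ (T:ℝ)⁻¹ * S := by
    apply ciSup_le
    intro u'
    refine (hjensen u').trans ?_
    have : ∑ t, f (x t) u' ≤ S := le_ciSup hbddS u'
    exact mul_le_mul_of_nonneg_left this (inv_nonneg.mpr hTpos.le)
  have : (T:ℝ)⁻¹ * S ≤ Ru / T + C * m := by
    have h := mul_le_mul_of_nonneg_left hSle (inv_nonneg.mpr hTpos.le)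
    calc (T:ℝ)⁻¹ * S ≤ (T:ℝ)⁻¹ * (Ru + C * (T * m)) := h
      _ = Ru / T + C * m := by field_simp
  linarith [hsup.trans this]
end

section
/- Let U = conv{(1,1), (−1,−1), (2,1)} ⊆ ℝ² and let L be the segment conv{(0,1), (−2,−1)} ⊆ ℝ². For every x ∈ L, min_{u∈U} ⟨u,x⟩ ≤ −1/5. -/
open Matrix

/-- On the segment between `(0,1)` and `(−2,−1)`, the worst case over
`U = conv{(1,1),(−1,−1),(2,1)}` is at most `−1/5`. -/
theorem stmt_4 :
    ∀ x ∈ segment ℝ (![0, 1] : Fin 2 → ℝ) ![-2, -1],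
      ∃ u ∈ convexHull ℝ ({![1, 1], ![-1, -1], ![2, 1]} : Set (Fin 2 → ℝ)),
        u ⬝ᵥ x ≤ -1 / 5 := by
  rintro x ⟨a, b, ha, hb, hab, rfl⟩
  rcases le_or_gt (1/5 : ℝ) b with h | h
  · refine ⟨![2, 1], subset_convexHull ℝ _ (by norm_num), ?_⟩
    simp [dotProduct, Fin.sum_univ_two]
    nlinarith
  · refine ⟨![-1, -1], subset_convexHull ℝ _ (by norm_num), ?_⟩
    simp [dotProduct, Fin.sum_univ_two]
    nlinarith
end

section
/- Let f¹,…,fⁿ : X → ℝ (for fixed choices of u the dependence on u is suppressed) and let Λ ⊆ Δ(n) be a subset of the probability simplex. Suppose for each i a sequence u^i_t ∈ U^i satisfies max_{u∈U^i} ∑_{t=1}^T f^i(x_t,u) − ∑_{t=1}^T f^i(x_t,u^i_t) ≤ R^i for all i, and λ_t ∈ Λ satisfies max_{λ∈Λ} ∑_{t=1}^T ⟨λ, F(x_t, ū_t)⟩ − ∑_{t=1}^T ⟨λ_t, F(x_t, ū_t)⟩ ≤ R_λ, where F(x, ū) = (f¹(x,u¹),…,fⁿ(x,uⁿ)) and ū_t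 = (u¹_t,…,uⁿ_t). Then max_{λ∈Λ, ū∈∏ᵢU^i} ∑_{t=1}^T ⟨λ, F(x_t,ū)⟩ − ∑_{t=1}^T ⟨λ_t, F(x_t,ū_t)⟩ ≤ max_i R^i + R_λ. -/
/-- Proposition 1 (pro.multi.dual): combining per-coordinate `u`-regret
bounds with a `λ`-regret bound yields a joint regret bound for the dual
player `(ū, λ)`. -/
theorem stmt_8 {n : ℕ} (hn : 0 < n) {X : Type*} {U : Fin n → Type*}
    [∀ i, Fintype (U i)] [∀ i, Nonempty (U i)]
    (Λ : Set (Fin n → ℝ)) (hΛne : Λ.Nonempty) (hΛcpt : IsCompact Λ)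
    (hΛ : Λ ⊆ stdSimplex ℝ (Fin n))
    (f : ∀ i : Fin n, X → U i → ℝ)
    (T : ℕ) (hT : 1 ≤ T)
    (x : Fin T → X) (uu : Fin T → ∀ i, U i) (lam : Fin T → Fin n → ℝ)
    (hlam : ∀ t, lam t ∈ Λ)
    (R : Fin n → ℝ) (Rlam : ℝ)
    (hRu : ∀ i, (⨆ u' : U i, ∑ t, f i (x t) u') - ∑ t, f i (x t) (uu t i) ≤ R i)
    (hRlam : sSup ((fun l => ∑ t, ∑ i, l i * f i (x t) (uu t i)) '' Λ)
        - (∑ t, ∑ i, lam t i * f i (x t) (uu t i)) ≤ Rlam) :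
    sSup {v : ℝ | ∃ l ∈ Λ, ∃ ub : ∀ i, U i,
        v = ∑ t, ∑ i, l i * f i (x t) (ub i)}
      - (∑ t, ∑ i, lam t i * f i (x t) (uu t i)) ≤ (⨆ i, R i) + Rlam := by
  classical
  haveI : Nonempty (Fin n) := ⟨⟨0, hn⟩⟩
  set A := sSup ((fun l => ∑ t, ∑ i, l i * f i (x t) (uu t i)) '' Λ) with hAdef
  have hcont : Continuous (fun l : Fin n → ℝ => ∑ t, ∑ i, l i * f i (x t) (uu t i)) := by
    fun_prop
  have hbdd : BddAbove ((fun l => ∑ t, ∑ i, l i * f i (x t) (uu t i)) '' Λ) :=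
    (hΛcpt.image hcont).bddAbove
  have hAle : ∀ l ∈ Λ, ∑ t, ∑ i, l i * f i (x t) (uu t i) ≤ A :=
    fun l hl => le_csSup hbdd ⟨l, hl, rfl⟩
  have hRsup : ∀ i, R i ≤ ⨆ i, R i := fun i =>
    le_ciSup (Set.finite_range R).bddAbove i
  have hfi : ∀ i (u' : U i), ∑ t, f i (x t) u' ≤ ∑ t, f i (x t) (uu t i) + R i := by
    intro i u'
    have h1 : ∑ t, f i (x t) u' ≤ ⨆ u' : U i, ∑ t, f i (x t) u' :=
      le_ciSup (f := fun u' : U i => ∑ t, f i (x t) u') (Set.finite_range _).bddAbove u'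
    have := hRu i
    linarith
  have hmain : sSup {v : ℝ | ∃ l ∈ Λ, ∃ ub : ∀ i, U i,
      v = ∑ t, ∑ i, l i * f i (x t) (ub i)} ≤ (⨆ i, R i) + A := by
    apply csSup_le
    · obtain ⟨l, hl⟩ := hΛne
      exact ⟨_, l, hl, fun i => Classical.arbitrary _, rfl⟩
    · rintro v ⟨l, hl, ub, rfl⟩
      have hls := hΛ hl
      have hnn : ∀ i, (0:ℝ) ≤ l i := fun i => hls.1 i
      have hsum1 : ∑ i, l i = 1 := hls.2
      have step1 : ∑ t, ∑ i, l i * f i (x t) (ub i)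
          = ∑ i, l i * ∑ t, f i (x t) (ub i) := by
        rw [Finset.sum_comm]
        simp [Finset.mul_sum]
      have step2 : ∑ i, l i * ∑ t, f i (x t) (ub i)
          ≤ ∑ i, l i * (∑ t, f i (x t) (uu t i) + R i) :=
        Finset.sum_le_sum fun i _ =>
          mul_le_mul_of_nonneg_left (hfi i (ub i)) (hnn i)
      have step3 : ∑ i, l i * (∑ t, f i (x t) (uu t i) + R i)
          = (∑ i, l i * ∑ t, f i (x t) (uu t i)) + ∑ i, l i * R i := by
        rw [← Finset.sum_add_distrib]
        simp [mul_add]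
      have step4 : ∑ i, l i * ∑ t, f i (x t) (uu t i) ≤ A := by
        have : ∑ i, l i * ∑ t, f i (x t) (uu t i)
            = ∑ t, ∑ i, l i * f i (x t) (uu t i) := by
          rw [Finset.sum_comm]
          simp [Finset.mul_sum]
        rw [this]; exact hAle l hl
      have step5 : ∑ i, l i * R i ≤ ⨆ i, R i := by
        calc ∑ i, l i * R i ≤ ∑ i, l i * ⨆ i, R i :=
              Finset.sum_le_sum fun i _ =>
                mul_le_mul_of_nonneg_left (hRsup i) (hnn i)
          _ = (∑ i, l i) * ⨆ i, R i := by rw [Finset.sum_mul]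
          _ = ⨆ i, R i := by rw [hsum1, one_mul]
      linarith
  linarith
end

section
/- Let X ⊆ ℝᵐ be convex, Λ ⊆ Δ(n), U¹,…,Uⁿ sets, and f^i(·,u) convex on X for every u ∈ U^i. Define F(x,ū) = max_{λ∈Λ} ∑ᵢ λᵢ f^i(x,u^i). Suppose sequences x_t ∈ X, u^i_t ∈ U^i satisfy: (i) ∑_{t=1}^T F(x_t,ū_t) − min_{x∈X} ∑_{t=1}^T F(x,ū_t) ≤ R_x; (ii) for each i, max_{u∈U^i} ∑_{t=1}^T f^i(x_t,u) − ∑_{t=1}^T f^i(x_t,u^i_t) ≤ R^i. Then x̄ = (1/T)∑ x_t satisfies max_{ū∈∏U^i} F(x̄,ū) − min_{x∈X} max_{ū∈∏U^i} F(x,ū) ≤ (R_x + max_i R^i)/T. -/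
open Metric Bornology Set

lemma convexOn_bddBelow_of_span_top {V : Type*} [NormedAddCommGroup V] [NormedSpace ℝ V]
    [FiniteDimensional ℝ V] {Y : Set V} (hcpt : IsCompact Y) (hconv : Convex ℝ Y)
    (hspan : affineSpan ℝ Y = ⊤) {g : V → ℝ} (hg : ConvexOn ℝ Y g) :
    BddBelow (g '' Y) := by
  have hint : (interior Y).Nonempty :=
    (hconv.interior_nonempty_iff_affineSpan_eq_top).2 hspan
  obtain ⟨z, hz⟩ := hint
  obtain ⟨ε, hε, hball⟩ := Metric.isOpen_iff.1 isOpen_interior z hz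
  obtain ⟨δ, hδ, hδε⟩ : ∃ δ : ℝ, 0 < δ ∧ δ < ε := ⟨ε / 2, by positivity, by linarith⟩
  have hKY : closedBall z δ ⊆ Y := fun y hy =>
    interior_subset (hball (lt_of_le_of_lt (mem_closedBall.1 hy) hδε))
  have hgc : ContinuousOn g (closedBall z δ) :=
    (hg.continuousOn_interior).mono fun y hy =>
      hball (lt_of_le_of_lt (mem_closedBall.1 hy) hδε)
  obtain ⟨M, hM⟩ := (isCompact_closedBall z δ).exists_bound_of_continuousOn hgc
  have hM0 : 0 ≤ M := le_trans (norm_nonneg _) (hM z (mem_closedBall_self hδ.le))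
  obtain ⟨D₀, hD₀⟩ := hcpt.isBounded.subset_closedBall z
  obtain ⟨D, hD0, hYD⟩ : ∃ D : ℝ, 0 ≤ D ∧ ∀ x ∈ Y, ‖x - z‖ ≤ D := by
    refine ⟨max D₀ 0, le_max_right _ _, fun x hx => ?_⟩
    have := hD₀ hx
    rw [mem_closedBall, dist_eq_norm] at this
    exact this.trans (le_max_left _ _)
  refine ⟨-(2 * M * (δ + D) / δ), ?_⟩
  rintro _ ⟨x, hx, rfl⟩
  have hkey : δ / (δ + D) * g x ≥ -(2 * M) := by
    by_cases hxz : x = z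
    · subst hxz
      have h1 : -M ≤ g x := by
        have := abs_le.1 (hM x (mem_closedBall_self hδ.le))
        simpa using this.1
      by_cases hgx : 0 ≤ g x
      · nlinarith [div_nonneg hδ.le (by linarith : (0:ℝ) ≤ δ + D)]
      · push_neg at hgx
        have ht1 : δ / (δ + D) ≤ 1 := by
          rw [div_le_one (by linarith)]; linarith
        nlinarith
    · have hr : 0 < ‖z - x‖ := by
        rw [norm_pos_iff, sub_ne_zero]; exact fun h => hxz h.symm
      set r : ℝ := ‖z - x‖ with hrdef
      have hrD : r ≤ D := by
        have := hYD x hx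
        rwa [show ‖x - z‖ = r by rw [hrdef, norm_sub_rev]] at this
      set y : V := z + (δ / r) • (z - x) with hydef
      have hyK : y ∈ closedBall z δ := by
        rw [mem_closedBall, dist_eq_norm]
        have h1 : y - z = (δ / r) • (z - x) := by rw [hydef]; abel
        rw [h1, norm_smul, Real.norm_eq_abs, abs_of_pos (by positivity), ← hrdef,
          div_mul_cancel₀ _ hr.ne']
      set t : ℝ := δ / (δ + r) with htdef
      clear_value r t
      have hδr : (0:ℝ) < δ + r := by linarith
      have ht0 : 0 < t := by rw [htdef]; positivity
      have ht1 : t < 1 := by rw [htdef, div_lt_one hδr]; linarith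
      have h1t : 1 - t = r / (δ + r) := by
        rw [htdef]; field_simp; ring
      have e1 : (1 - t) * (δ / r) = t := by
        rw [h1t, htdef]; field_simp
      have hcomb : t • x + (1 - t) • y = z := by
        rw [hydef, smul_add, smul_smul, e1]; module
      have hcv := hg.2 hx (hKY hyK) ht0.le (by linarith : (0:ℝ) ≤ 1 - t)
        (by ring : t + (1 - t) = 1)
      rw [hcomb] at hcv
      simp only [smul_eq_mul] at hcv
      have hgz : -M ≤ g z := by
        have := abs_le.1 (hM z (mem_closedBall_self hδ.le))
        simpa using this.1
      have hgy : g y ≤ M := by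
        have := abs_le.1 (hM y hyK)
        simpa using this.2
      have h1 : -(2 * M) ≤ t * g x := by nlinarith
      by_cases hgx : 0 ≤ g x
      · nlinarith [div_nonneg hδ.le (by linarith : (0:ℝ) ≤ δ + D)]
      · push_neg at hgx
        have ht_lb : δ / (δ + D) ≤ t := by
          rw [htdef]
          exact div_le_div_of_nonneg_left hδ.le hδr (by linarith)
        have h2 : t * g x ≤ δ / (δ + D) * g x :=
          mul_le_mul_of_nonpos_right ht_lb hgx.le
        linarith
  have hq : 0 < δ / (δ + D) := div_pos hδ (by linarith)
  rw [ge_iff_le, ← div_le_iff₀' hq] at hkey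
  have : -(2 * M) / (δ / (δ + D)) = -(2 * M * (δ + D) / δ) := by
    field_simp
  linarith [hkey, this ▸ hkey]

lemma convexOn_bddBelow {E : Type*} [NormedAddCommGroup E] [NormedSpace ℝ E]
    [FiniteDimensional ℝ E] {X : Set E} (hcpt : IsCompact X) (hconv : Convex ℝ X)
    {f : E → ℝ} (hf : ConvexOn ℝ X f) : BddBelow (f '' X) := by
  rcases X.eq_empty_or_nonempty with rfl | ⟨z₀, hz₀⟩
  · simp
  set V : Submodule ℝ E := (affineSpan ℝ X).direction with hVdef
  let φ : V →ᵃ[ℝ] E := V.subtype.toAffineMap + AffineMap.const ℝ V z₀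
  have hφ : ∀ v : V, φ v = (v : E) + z₀ := fun v => rfl
  set Y : Set V := φ ⁻¹' X with hYdef
  have hYconv : Convex ℝ Y := hconv.affine_preimage φ
  have hg : ConvexOn ℝ Y (f ∘ φ) := hf.comp_affineMap φ
  have hφcont : Continuous φ := φ.continuous_of_finiteDimensional
  have hYcl : IsClosed Y := hcpt.isClosed.preimage hφcont
  have hYbd : IsBounded Y := by
    obtain ⟨ρ, hρ⟩ := hcpt.isBounded.subset_closedBall 0
    refine (isBounded_closedBall (x := (0:V)) (r := ρ + ‖z₀‖)).subset fun v hv => ?_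
    have h1 : φ v ∈ closedBall (0:E) ρ := hρ hv
    rw [mem_closedBall, dist_zero_right] at h1 ⊢
    have : ‖(v:E)‖ ≤ ρ + ‖z₀‖ := by
      have h2 : ‖(v:E)‖ = ‖((v:E) + z₀) - z₀‖ := by simp
      rw [hφ] at h1
      calc ‖(v:E)‖ = ‖((v:E) + z₀) - z₀‖ := h2
        _ ≤ ‖(v:E) + z₀‖ + ‖z₀‖ := norm_sub_le _ _
        _ ≤ ρ + ‖z₀‖ := by linarith
    simpa using this
  have hYcpt : IsCompact Y := Metric.isCompact_of_isClosed_isBounded hYcl hYbd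
  have h0Y : (0 : V) ∈ Y := by
    rw [hYdef, Set.mem_preimage, hφ]; simpa using hz₀
  -- span of Y is everything
  have hspanY : Submodule.span ℝ Y = ⊤ := by
    apply Submodule.map_injective_of_injective V.injective_subtype
    rw [Submodule.map_span, Submodule.map_top, Submodule.range_subtype]
    have himg : V.subtype '' Y = (fun x => x - z₀) '' X := by
      ext w
      constructor
      · rintro ⟨v, hv, rfl⟩
        refine ⟨φ v, hv, ?_⟩
        rw [hφ]; simp
      · rintro ⟨x, hx, rfl⟩
        have hmem : x - z₀ ∈ V := by
          rw [hVdef]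
          have := AffineSubspace.vsub_mem_direction (subset_affineSpan ℝ X hx)
            (subset_affineSpan ℝ X hz₀)
          simpa using this
        refine ⟨⟨x - z₀, hmem⟩, ?_, rfl⟩
        rw [hYdef, Set.mem_preimage, hφ]
        simpa using hx
    rw [himg, hVdef, direction_affineSpan, vectorSpan_eq_span_vsub_set_right ℝ hz₀]
    congr 1
  have hspan : affineSpan ℝ Y = ⊤ := by
    rw [AffineSubspace.affineSpan_eq_top_iff_vectorSpan_eq_top_of_nonempty ℝ ↥V ↥V ⟨0, h0Y⟩,
      vectorSpan_eq_span_vsub_set_right ℝ h0Y, ← hspanY]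
    congr 1
    simp [vsub_eq_sub]
  have hbdd : BddBelow ((f ∘ φ) '' Y) :=
    convexOn_bddBelow_of_span_top hYcpt hYconv hspan hg
  obtain ⟨L, hL⟩ := hbdd
  refine ⟨L, ?_⟩
  rintro _ ⟨x, hx, rfl⟩
  have hmem : x - z₀ ∈ V := by
    rw [hVdef]
    have := AffineSubspace.vsub_mem_direction (subset_affineSpan ℝ X hx)
      (subset_affineSpan ℝ X hz₀)
    simpa using this
  have hxY : (⟨x - z₀, hmem⟩ : V) ∈ Y := by
    rw [hYdef, Set.mem_preimage, hφ]; simpa using hx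
  have := hL ⟨⟨x - z₀, hmem⟩, hxY, rfl⟩
  rwa [Function.comp_apply, hφ, show (((⟨x - z₀, hmem⟩ : V) : E) + z₀) = x by simp] at this


/-- Theorem B.2 (explicit maximum, thm.constraint-app1-main): with
`F(x,ū) = max_{λ∈Λ} ∑ᵢ λᵢ fⁱ(x,uⁱ)`, regret bounds for the primal player
(w.r.t. `F`) and per-coordinate dual players give near-optimality of the
average iterate. -/
theorem stmt_9 {n m : ℕ} (hn : 0 < n) {U : Fin n → Type*}
    [∀ i, Fintype (U i)] [∀ i, Nonempty (U i)]
    (Λ : Set (Fin n → ℝ)) (hΛne : Λ.Nonempty) (hΛcpt : IsCompact Λ)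
    (hΛ : Λ ⊆ stdSimplex ℝ (Fin n))
    (X : Set (Fin m → ℝ)) (hXne : X.Nonempty) (hXcpt : IsCompact X)
    (hXconv : Convex ℝ X)
    (f : ∀ i : Fin n, (Fin m → ℝ) → U i → ℝ)
    (hfconv : ∀ i (u : U i), ConvexOn ℝ X fun x => f i x u)
    (F : (Fin m → ℝ) → (∀ i, U i) → ℝ)
    (hF : ∀ x ub, F x ub = sSup ((fun l => ∑ i, l i * f i x (ub i)) '' Λ))
    (T : ℕ) (hT : 1 ≤ T)
    (x : Fin T → (Fin m → ℝ)) (uu : Fin T → ∀ i, U i)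
    (hxX : ∀ t, x t ∈ X)
    (Rx : ℝ) (R : Fin n → ℝ)
    (hRx : (∑ t, F (x t) (uu t))
        - sInf ((fun x' => ∑ t, F x' (uu t)) '' X) ≤ Rx)
    (hRu : ∀ i, (⨆ u' : U i, ∑ t, f i (x t) u') - ∑ t, f i (x t) (uu t i) ≤ R i) :
    (⨆ ub : ∀ i, U i, F ((T : ℝ)⁻¹ • ∑ t, x t) ub)
      - sInf ((fun x' => ⨆ ub : ∀ i, U i, F x' ub) '' X)
      ≤ (Rx + ⨆ i, R i) / T := by
  have hnn : Nonempty (Fin n) := ⟨⟨0, hn⟩⟩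
  have hT0 : (0:ℝ) < T := by exact_mod_cast hT
  -- basic facts about sSup over Λ
  have hcont : ∀ (c : Fin n → ℝ), Continuous fun l : Fin n → ℝ => ∑ i, l i * c i :=
    fun c => continuous_finset_sum _ fun i _ => (continuous_apply i).mul continuous_const
  have hbddS : ∀ (c : Fin n → ℝ), BddAbove ((fun l => ∑ i, l i * c i) '' Λ) :=
    fun c => (hΛcpt.image (hcont c)).bddAbove
  have hFge : ∀ x' ub l, l ∈ Λ → ∑ i, l i * f i x' (ub i) ≤ F x' ub := by
    intro x' ub l hl
    rw [hF]
    exact le_csSup (hbddS _) ⟨l, hl, rfl⟩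
  have hFmax : ∀ x' ub, ∃ l ∈ Λ, F x' ub = ∑ i, l i * f i x' (ub i) := by
    intro x' ub
    obtain ⟨l, hl, hmax⟩ := hΛcpt.exists_isMaxOn hΛne (hcont _).continuousOn
    refine ⟨l, hl, le_antisymm ?_ (hFge x' ub l hl)⟩
    rw [hF]
    exact csSup_le (hΛne.image _) (by rintro _ ⟨l', hl', rfl⟩; exact hmax hl')
  -- convexity of F in x
  have hFconv : ∀ ub, ConvexOn ℝ X (fun x' => F x' ub) := by
    intro ub
    refine ⟨hXconv, fun p hp q hq a b ha hb hab => ?_⟩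
    obtain ⟨l, hl, hEq⟩ := hFmax (a • p + b • q) ub
    simp only [smul_eq_mul]
    rw [hEq]
    calc ∑ i, l i * f i (a • p + b • q) (ub i)
        ≤ ∑ i, l i * (a * f i p (ub i) + b * f i q (ub i)) := by
          refine Finset.sum_le_sum fun i _ => mul_le_mul_of_nonneg_left ?_ ((hΛ hl).1 i)
          have := (hfconv i (ub i)).2 hp hq ha hb hab
          simpa [smul_eq_mul] using this
      _ = a * ∑ i, l i * f i p (ub i) + b * ∑ i, l i * f i q (ub i) := by
          rw [Finset.mul_sum, Finset.mul_sum, ← Finset.sum_add_distrib]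
          exact Finset.sum_congr rfl fun i _ => by ring
      _ ≤ a * F p ub + b * F q ub :=
          add_le_add (mul_le_mul_of_nonneg_left (hFge p ub l hl) ha)
            (mul_le_mul_of_nonneg_left (hFge q ub l hl) hb)
  -- the average iterate
  set xbar : Fin m → ℝ := (T : ℝ)⁻¹ • ∑ t, x t with hxbar
  have hw1 : ∑ _t : Fin T, (T:ℝ)⁻¹ = 1 := by
    simp [Finset.sum_const, mul_inv_cancel₀ hT0.ne']
  have hxbarX : xbar ∈ X := by
    rw [hxbar, Finset.smul_sum]
    exact hXconv.sum_mem (fun t _ => by positivity) hw1 fun t _ => hxX t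
  have hJensen : ∀ i (u : U i), (T:ℝ) * f i xbar u ≤ ∑ t, f i (x t) u := by
    intro i u
    have h1 := (hfconv i u).map_sum_le (t := Finset.univ) (w := fun _ => (T:ℝ)⁻¹)
      (p := x) (fun t _ => by positivity) hw1 (fun t _ => hxX t)
    have h2 : f i xbar u ≤ ∑ t, (T:ℝ)⁻¹ * f i (x t) u := by
      simpa [hxbar, Finset.smul_sum, smul_eq_mul] using h1
    have h3 : (T:ℝ) * ∑ t, (T:ℝ)⁻¹ * f i (x t) u = ∑ t, f i (x t) u := by
      rw [← Finset.mul_sum, ← mul_assoc, mul_inv_cancel₀ hT0.ne', one_mul]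
    have h4 := mul_le_mul_of_nonneg_left h2 hT0.le
    linarith
  -- dual regret per coordinate
  have hdual : ∀ i (u : U i), ∑ t, f i (x t) u ≤ ∑ t, f i (x t) (uu t i) + R i := by
    intro i u
    have h1 : ∑ t, f i (x t) u ≤ ⨆ u' : U i, ∑ t, f i (x t) u' :=
      le_ciSup (f := fun u' : U i => ∑ t, f i (x t) u') (Finite.bddAbove_range _) u
    linarith [hRu i]
  -- max of R
  have hRmax : ∀ l ∈ Λ, ∑ i, l i * R i ≤ ⨆ i, R i := by
    intro l hl
    calc ∑ i, l i * R i ≤ ∑ i, l i * (⨆ i, R i) := by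
          refine Finset.sum_le_sum fun i _ => mul_le_mul_of_nonneg_left ?_ ((hΛ hl).1 i)
          exact le_ciSup (Finite.bddAbove_range _) i
      _ = (⨆ i, R i) := by rw [← Finset.sum_mul, (hΛ hl).2, one_mul]
  -- sup over ub attained
  obtain ⟨ub₀, hub₀⟩ := Finite.exists_max fun ub : ∀ i, U i => F xbar ub
  have hsup_eq : (⨆ ub : ∀ i, U i, F xbar ub) = F xbar ub₀ :=
    le_antisymm (ciSup_le hub₀) (le_ciSup (Finite.bddAbove_range _) ub₀)
  -- the main chain: T * F xbar ub₀ ≤ ∑ t, F (x t) (uu t) + maxR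
  obtain ⟨l, hl, hFl⟩ := hFmax xbar ub₀
  have hchain : (T:ℝ) * F xbar ub₀ ≤ (∑ t, F (x t) (uu t)) + ⨆ i, R i := by
    calc (T:ℝ) * F xbar ub₀ = ∑ i, l i * ((T:ℝ) * f i xbar (ub₀ i)) := by
          rw [hFl, Finset.mul_sum]
          exact Finset.sum_congr rfl fun i _ => by ring
      _ ≤ ∑ i, l i * (∑ t, f i (x t) (uu t i) + R i) := by
          refine Finset.sum_le_sum fun i _ => mul_le_mul_of_nonneg_left ?_ ((hΛ hl).1 i)
          exact le_trans (hJensen i (ub₀ i)) (hdual i (ub₀ i))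
      _ = (∑ t, ∑ i, l i * f i (x t) (uu t i)) + ∑ i, l i * R i := by
          have he : ∀ i : Fin n, l i * (∑ t, f i (x t) (uu t i) + R i)
              = (∑ t, l i * f i (x t) (uu t i)) + l i * R i := fun i => by
            rw [mul_add, Finset.mul_sum]
          rw [Finset.sum_congr rfl fun i _ => he i, Finset.sum_add_distrib, Finset.sum_comm]
      _ ≤ (∑ t, F (x t) (uu t)) + ⨆ i, R i :=
          add_le_add (Finset.sum_le_sum fun t _ => hFge (x t) (uu t) l hl) (hRmax l hl)
  -- bounded below of the primal objective over X
  have hh : ConvexOn ℝ X fun x' => ∑ t, F x' (uu t) := by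
    refine ⟨hXconv, fun p hp q hq a b ha hb hab => ?_⟩
    simp only [smul_eq_mul]
    calc ∑ t, F (a • p + b • q) (uu t)
        ≤ ∑ t, (a * F p (uu t) + b * F q (uu t)) := by
          refine Finset.sum_le_sum fun t _ => ?_
          have := (hFconv (uu t)).2 hp hq ha hb hab
          simpa [smul_eq_mul] using this
      _ = a * ∑ t, F p (uu t) + b * ∑ t, F q (uu t) := by
          rw [Finset.mul_sum, Finset.mul_sum, ← Finset.sum_add_distrib]
  have hAbdd : BddBelow ((fun x' => ∑ t, F x' (uu t)) '' X) :=
    convexOn_bddBelow hXcpt hXconv hh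
  -- sInf A ≤ T * sInf B
  have hInf : sInf ((fun x' => ∑ t, F x' (uu t)) '' X)
      ≤ (T:ℝ) * sInf ((fun x' => ⨆ ub : ∀ i, U i, F x' ub) '' X) := by
    rw [← div_le_iff₀' hT0]
    refine le_csInf (hXne.image _) ?_
    rintro _ ⟨x', hx', rfl⟩
    rw [div_le_iff₀' hT0]
    have h1 : sInf ((fun x' => ∑ t, F x' (uu t)) '' X) ≤ ∑ t, F x' (uu t) :=
      csInf_le hAbdd ⟨x', hx', rfl⟩
    have h2 : ∑ t, F x' (uu t) ≤ (T:ℝ) * ⨆ ub : ∀ i, U i, F x' ub := by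
      calc ∑ t, F x' (uu t) ≤ ∑ _t : Fin T, ⨆ ub : ∀ i, U i, F x' ub :=
            Finset.sum_le_sum fun t _ => le_ciSup (Finite.bddAbove_range _) (uu t)
        _ = (T:ℝ) * ⨆ ub : ∀ i, U i, F x' ub := by
            simp [Finset.sum_const, mul_comm]
    linarith
  rw [hsup_eq, le_div_iff₀ hT0]
  nlinarith [hchain, hRx, hInf]
end

section
/- Suppose f^i : X × U^i → ℝ are nonnegative functions, Λ = Δ(n), and F(x,ū) = max_i f^i(x,u^i). If for each i the sequence u^i_t satisfies max_{u∈U^i} ∑_{t=1}^T f^i(x_t,u) − ∑_{t=1}^T f^i(x_t,u^i_t) ≤ R^i, then for every ū ∈ ∏ᵢU^i: ∑_{t=1}^T F(x_t,ū) − ∑_{t=1}^T F(x_t,ū_t) ≤ ∑ᵢ R^i + n·∑_{t=1}^T F(x_t,ū_t), where ū_t = (u¹_t,…,uⁿ_t). -/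
/-- Key inequality (equ.usedforinfe) in Theorem B.4: with nonnegative
`fⁱ` and `F(x,ū) = maxᵢ fⁱ(x,uⁱ)`, per-coordinate regret bounds control
the regret of the maximum up to `n` times the realized maximum. -/
theorem stmt_11 {n : ℕ} (hn : 0 < n) {X : Type*} {U : Fin n → Type*}
    [∀ i, Fintype (U i)] [∀ i, Nonempty (U i)]
    (f : ∀ i : Fin n, X → U i → ℝ)
    (hfnonneg : ∀ i x u, 0 ≤ f i x u)
    (T : ℕ) (hT : 1 ≤ T)
    (x : Fin T → X) (uu : Fin T → ∀ i, U i)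
    (R : Fin n → ℝ)
    (hRu : ∀ i, (⨆ u' : U i, ∑ t, f i (x t) u') - ∑ t, f i (x t) (uu t i) ≤ R i) :
    ∀ ub : ∀ i, U i,
      (∑ t, ⨆ i, f i (x t) (ub i)) - (∑ t, ⨆ i, f i (x t) (uu t i))
        ≤ (∑ i, R i) + n * ∑ t, ⨆ i, f i (x t) (uu t i) := by
  intro ub
  haveI : Nonempty (Fin n) := ⟨⟨0, hn⟩⟩
  have hmaxle : ∀ t, (⨆ i, f i (x t) (ub i)) ≤ ∑ i, f i (x t) (ub i) := by
    intro t
    apply ciSup_le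
    intro i
    exact Finset.single_le_sum (f := fun j => f j (x t) (ub j))
      (fun j _ => hfnonneg j _ _) (Finset.mem_univ i)
  have h1 : (∑ t, ⨆ i, f i (x t) (ub i)) ≤ ∑ i, ∑ t, f i (x t) (ub i) := by
    rw [Finset.sum_comm]
    exact Finset.sum_le_sum fun t _ => hmaxle t
  have h2 : ∀ i, ∑ t, f i (x t) (ub i) ≤ R i + ∑ t, f i (x t) (uu t i) := by
    intro i
    have hle : ∑ t, f i (x t) (ub i) ≤ ⨆ u' : U i, ∑ t, f i (x t) u' :=
      le_ciSup (f := fun u' : U i => ∑ t, f i (x t) u') (Finite.bddAbove_range _) (ub i)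
    linarith [hRu i]
  have h3 : ∀ i, ∑ t, f i (x t) (uu t i) ≤ ∑ t, ⨆ j, f j (x t) (uu t j) := by
    intro i
    exact Finset.sum_le_sum fun t _ => le_ciSup (f := fun j => f j (x t) (uu t j)) (Finite.bddAbove_range _) i
  have h4 : (∑ t, ⨆ i, f i (x t) (ub i))
      ≤ (∑ i, R i) + ∑ i : Fin n, ∑ t, ⨆ j, f j (x t) (uu t j) := by
    calc (∑ t, ⨆ i, f i (x t) (ub i)) ≤ ∑ i, ∑ t, f i (x t) (ub i) := h1
      _ ≤ ∑ i, (R i + ∑ t, f i (x t) (uu t i)) := Finset.sum_le_sum fun i _ => h2 i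
      _ = (∑ i, R i) + ∑ i, ∑ t, f i (x t) (uu t i) := Finset.sum_add_distrib
      _ ≤ (∑ i, R i) + ∑ i : Fin n, ∑ t, ⨆ j, f j (x t) (uu t j) := by
          exact add_le_add_right (Finset.sum_le_sum fun i _ => h3 i) _
  have hconst : ∑ i : Fin n, ∑ t, ⨆ j, f j (x t) (uu t j)
      = n * ∑ t, ⨆ j, f j (x t) (uu t j) := by
    simp [Finset.sum_const, nsmul_eq_mul]
  have hnn : 0 ≤ ∑ t, ⨆ j, f j (x t) (uu t j) := by
    apply Finset.sum_nonneg
    intro t _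
    exact le_ciSup_of_le (Finite.bddAbove_range _) ⟨0, hn⟩ (hfnonneg _ _ _)
  rw [hconst] at h4
  linarith
end
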